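/- For every integer k ≥ 1 and every integer n ≥ 3, the k-power propagation time of the cycle C_n on n vertices equals ⌊n/2⌋. -/

import Mathlib

namespace PowerProp

open SimpleGraph

variable {V : Type*} {α β : Type*}

/-- The closed neighborhood `N[S]` of a set of vertices. -/
def closedNbhd (G : SimpleGraph V) (S : Set V) : Set V :=
  S ∪ ⋃ v ∈ S, G.neighborSet v

/-- One propagation step of the `k`-power domination process. -/
def propStep (k : ℕ) (G : SimpleGraph V) (S : Set V) : Set V :=
  S ∪ {w | ∃ v ∈ S, w ∈ G.neighborSet v \ S ∧ (G.neighborSet v \ S).ncard ≤ k}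

/-- `S^[t]`: the set observed after `t` steps (step 1 is the domination step). -/
def powerIter (k : ℕ) (G : SimpleGraph V) (S : Set V) : ℕ → Set V
  | 0 => S
  | 1 => closedNbhd G S
  | (t + 2) => propStep k G (powerIter k G S (t + 1))

/-- `S` is a `k`-power dominating set of `G`. -/
def IsPDS (k : ℕ) (G : SimpleGraph V) (S : Set V) : Prop :=
  ∃ l, powerIter k G S l = Set.univ

/-- The `k`-power domination number `γ_{P,k}(G)`. -/
noncomputable def pdNum (k : ℕ) (G : SimpleGraph V) : ℕ :=
  sInf {n | ∃ S : Set V, S.ncard = n ∧ IsPDS k G S}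

/-- `S` is a minimum `k`-power dominating set of `G`. -/
def IsMinPDS (k : ℕ) (G : SimpleGraph V) (S : Set V) : Prop :=
  IsPDS k G S ∧ S.ncard = pdNum k G

/-- `ppt_k(G,S)`, the `k`-power propagation time of `G` with `S`. -/
noncomputable def pptOf (k : ℕ) (G : SimpleGraph V) (S : Set V) : ℕ :=
  sInf {l | powerIter k G S l = Set.univ}

/-- `ppt_k(G)`, the (minimum) `k`-power propagation time of `G`. -/
noncomputable def ppt (k : ℕ) (G : SimpleGraph V) : ℕ :=
  sInf {t | ∃ S : Set V, IsMinPDS k G S ∧ pptOf k G S = t}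

end PowerProp

open PowerProp SimpleGraph
open Fin.CommRing

example (k : ℕ) (G : SimpleGraph ℕ) (S : Set ℕ) (t : ℕ) :
    powerIter k G S (t+2) = propStep k G (powerIter k G S (t+1)) := rfl

lemma powerIter_empty {V : Type*} (k : ℕ) (G : SimpleGraph V) (l : ℕ) :
    powerIter k G (∅ : Set V) l = ∅ := by
  induction l using Nat.twoStepInduction with
  | zero => rfl
  | one => simp [powerIter, closedNbhd]
  | more l _ ih => rw [powerIter, ih]; simp [propStep]

/-- The arc of radius `t` around `a`. -/
def arc (m : ℕ) (a : Fin (m+3)) (t : ℕ) : Set (Fin (m+3)) :=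
  {x | ∃ i : ℤ, -(t:ℤ) ≤ i ∧ i ≤ t ∧ x = a + i}

lemma arc_mono (m : ℕ) (a : Fin (m+3)) {s t : ℕ} (h : s ≤ t) : arc m a s ⊆ arc m a t := by
  rintro x ⟨i, h1, h2, rfl⟩
  exact ⟨i, by omega, by omega, rfl⟩

lemma mem_arc_self (m : ℕ) (a : Fin (m+3)) (t : ℕ) (i : ℤ) (h1 : -(t:ℤ) ≤ i) (h2 : i ≤ t) :
    a + (i : Fin (m+3)) ∈ arc m a t := ⟨i, h1, h2, rfl⟩

lemma nbhd_eq (m : ℕ) (v : Fin (m+3)) :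
    (cycleGraph (m+3)).neighborSet v = {v - 1, v + 1} :=
  cycleGraph_neighborSet (n := m+1)

section
variable {m : ℕ} {a : Fin (m+3)}

-- local notation
lemma arc0 (a : Fin (m+3)) : arc m a 0 = {a} := by
  ext x
  constructor
  · rintro ⟨i, h1, h2, rfl⟩
    have : i = 0 := by omega
    simp [this]
  · rintro rfl
    exact ⟨0, by simp⟩

lemma arc1 (a : Fin (m+3)) (k : ℕ) :
    closedNbhd (cycleGraph (m+3)) {a} = arc m a 1 := by
  ext x
  simp only [closedNbhd, Set.mem_union, Set.mem_iUnion, Set.mem_singleton_iff,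
    exists_prop, exists_eq_left, nbhd_eq, Set.mem_insert_iff]
  constructor
  · rintro (rfl | rfl | rfl)
    · exact ⟨0, by simp⟩
    · exact ⟨-1, by norm_num, by norm_num, by push_cast; ring⟩
    · exact ⟨1, by norm_num, by norm_num, by push_cast; ring⟩
  · rintro ⟨i, h1, h2, rfl⟩
    interval_cases i
    · right; left; push_cast; ring
    · left; simp
    · right; right; push_cast; ring
end

section
variable {m : ℕ} {a : Fin (m+3)}

lemma arc_step (k : ℕ) (hk : 1 ≤ k) (t : ℕ) (ht : 1 ≤ t) :
    propStep k (cycleGraph (m+3)) (arc m a t) = arc m a (t+1) := by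
  apply Set.Subset.antisymm
  · rintro w (hw | ⟨v, ⟨i, h1, h2, rfl⟩, ⟨hadj, -⟩, -⟩)
    · exact arc_mono m a (Nat.le_succ t) hw
    · rw [nbhd_eq] at hadj
      rcases hadj with rfl | rfl
      · exact ⟨i - 1, by push_cast; omega, by push_cast; omega, by push_cast; ring⟩
      · exact ⟨i + 1, by push_cast; omega, by push_cast; omega, by push_cast; ring⟩
  · rintro x ⟨i, h1, h2, rfl⟩
    by_cases hx : a + (i : Fin (m+3)) ∈ arc m a t
    · exact Or.inl hx
    · have hi : i = (t:ℤ) + 1 ∨ i = -((t:ℤ)+1) := by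
        push_cast at h1 h2
        by_contra h
        push_neg at h
        exact hx ⟨i, by omega, by omega, rfl⟩
      right
      rcases hi with rfl | rfl
      · refine ⟨a + ((t:ℤ) : Fin (m+3)), mem_arc_self m a t t (by omega) le_rfl, ⟨?_, hx⟩, ?_⟩
        · rw [nbhd_eq]
          right
          show a + (((t:ℤ)+1 : ℤ) : Fin (m+3)) = a + ((t:ℤ) : Fin (m+3)) + 1
          push_cast; ring
        · have hsub : (cycleGraph (m+3)).neighborSet (a + ((t:ℤ) : Fin (m+3))) \ arc m a t
              ⊆ {a + (((t:ℤ)+1 : ℤ) : Fin (m+3))} := by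
            rw [nbhd_eq]
            rintro y ⟨(rfl | rfl), hny⟩
            · exfalso
              apply hny
              have : a + ((t:ℤ) : Fin (m+3)) - 1 = a + (((t:ℤ)-1 : ℤ) : Fin (m+3)) := by
                push_cast; ring
              rw [this]
              exact mem_arc_self m a t _ (by omega) (by omega)
            · show a + ((t:ℤ) : Fin (m+3)) + 1 = a + (((t:ℤ)+1 : ℤ) : Fin (m+3))
              push_cast; ring
          calc ((cycleGraph (m+3)).neighborSet _ \ arc m a t).ncard ≤ 1 := by
                simpa using Set.ncard_le_ncard hsub (Set.finite_singleton _)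
            _ ≤ k := hk
      · refine ⟨a + ((Int.cast (-(t:ℤ))) : Fin (m+3)), mem_arc_self m a t (-(t:ℤ)) le_rfl (by omega),
          ⟨?_, hx⟩, ?_⟩
        · rw [nbhd_eq]
          left
          show a + ((-((t:ℤ)+1) : ℤ) : Fin (m+3)) = a + ((-(t:ℤ) : ℤ) : Fin (m+3)) - 1
          push_cast; ring
        · have hsub : (cycleGraph (m+3)).neighborSet (a + ((Int.cast (-(t:ℤ))) : Fin (m+3))) \ arc m a t
              ⊆ {a + ((-((t:ℤ)+1) : ℤ) : Fin (m+3))} := by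
            rw [nbhd_eq]
            rintro y ⟨(rfl | rfl), hny⟩
            · show a + ((-(t:ℤ) : ℤ) : Fin (m+3)) - 1 = a + ((-((t:ℤ)+1) : ℤ) : Fin (m+3))
              push_cast; ring
            · exfalso
              apply hny
              have : a + ((Int.cast (-(t:ℤ))) : Fin (m+3)) + 1 = a + ((-(t:ℤ)+1 : ℤ) : Fin (m+3)) := by
                push_cast; ring
              rw [this]
              exact mem_arc_self m a t _ (by omega) (by omega)
          calc ((cycleGraph (m+3)).neighborSet _ \ arc m a t).ncard ≤ 1 := by
                simpa using Set.ncard_le_ncard hsub (Set.finite_singleton _)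
            _ ≤ k := hk
end

section
variable {m : ℕ} {a : Fin (m+3)}

lemma powerIter_singleton (k : ℕ) (hk : 1 ≤ k) (t : ℕ) :
    powerIter k (cycleGraph (m+3)) {a} t = arc m a t := by
  induction t using Nat.twoStepInduction with
  | zero => exact (arc0 a).symm
  | one => exact arc1 a k
  | more t _ ih =>
    show propStep k (cycleGraph (m+3)) (powerIter k (cycleGraph (m+3)) {a} (t+1)) = _
    rw [ih, arc_step k hk (t+1) (by omega)]

lemma arc_eq_image (t : ℕ) :
    arc m a t = (fun i : ℤ => a + (i : Fin (m+3))) '' Set.Icc (-(t:ℤ)) t := by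
  ext x
  simp only [arc, Set.mem_image, Set.mem_Icc, Set.mem_setOf_eq]
  constructor
  · rintro ⟨i, h1, h2, rfl⟩; exact ⟨i, ⟨h1, h2⟩, rfl⟩
  · rintro ⟨i, ⟨h1, h2⟩, rfl⟩; exact ⟨i, h1, h2, rfl⟩

lemma arc_univ_iff (t : ℕ) : arc m a t = Set.univ ↔ m + 3 ≤ 2 * t + 1 := by
  constructor
  · intro h
    by_contra hlt
    push_neg at hlt
    have h1 : (arc m a t).ncard ≤ 2 * t + 1 := by
      rw [arc_eq_image]
      calc ((fun i : ℤ => a + (i : Fin (m+3))) '' Set.Icc (-(t:ℤ)) t).ncard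
          ≤ (Set.Icc (-(t:ℤ)) (t:ℤ)).ncard := Set.ncard_image_le (Set.finite_Icc _ _)
        _ = 2 * t + 1 := by
            rw [← Finset.coe_Icc, Set.ncard_coe_finset, Int.card_Icc]
            omega
    rw [h, Set.ncard_univ, Nat.card_eq_fintype_card, Fintype.card_fin] at h1
    omega
  · intro h
    ext x
    simp only [Set.mem_univ, iff_true]
    set d : ℤ := ((x - a).val : ℤ) with hd
    have hd0 : 0 ≤ d := Int.natCast_nonneg _
    have hdlt : d < (m:ℤ) + 3 := by
      have := (x - a).isLt
      omega
    have hcast : a + ((d : ℤ) : Fin (m+3)) = x := by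
      rw [hd]
      push_cast
      ring
    by_cases hdt : d ≤ t
    · exact ⟨d, by omega, hdt, hcast.symm⟩
    · refine ⟨d - (m+3), by omega, by omega, ?_⟩
      rw [← hcast]
      congr 1
      have : ((d - (m+3) : ℤ) : Fin (m+3)) = ((d : ℤ) : Fin (m+3)) - (((m+3 : ℕ) : ℤ) : Fin (m+3)) := by
        push_cast
        ring
      rw [this, eq_comm, sub_eq_self]
      exact_mod_cast Fin.natCast_self (m+3)
end

section
variable {m : ℕ}

lemma isPDS_singleton (k : ℕ) (hk : 1 ≤ k) (a : Fin (m+3)) :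
    IsPDS k (cycleGraph (m+3)) {a} :=
  ⟨m + 3, by rw [powerIter_singleton k hk, arc_univ_iff]; omega⟩

lemma pptOf_singleton (k : ℕ) (hk : 1 ≤ k) (a : Fin (m+3)) :
    pptOf k (cycleGraph (m+3)) {a} = (m+3)/2 := by
  unfold pptOf
  have hset : {l | powerIter k (cycleGraph (m+3)) {a} l = Set.univ} = Set.Ici ((m+3)/2) := by
    ext l
    simp only [Set.mem_setOf_eq, Set.mem_Ici, powerIter_singleton k hk, arc_univ_iff]
    omega
  rw [hset, csInf_Ici]

lemma pdNum_eq (k : ℕ) (hk : 1 ≤ k) : pdNum k (cycleGraph (m+3)) = 1 := by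
  have h1 : (1:ℕ) ∈ {n | ∃ S : Set (Fin (m+3)), S.ncard = n ∧ IsPDS k (cycleGraph (m+3)) S} :=
    ⟨{0}, Set.ncard_singleton _, isPDS_singleton k hk 0⟩
  have hle : pdNum k (cycleGraph (m+3)) ≤ 1 := Nat.sInf_le h1
  have hmem := Nat.sInf_mem (⟨1, h1⟩ :
    {n | ∃ S : Set (Fin (m+3)), S.ncard = n ∧ IsPDS k (cycleGraph (m+3)) S}.Nonempty)
  obtain ⟨S, hS, l, hl⟩ := hmem
  have hne : pdNum k (cycleGraph (m+3)) ≠ 0 := by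
    intro h0
    rw [show sInf {n | ∃ S : Set (Fin (m+3)), S.ncard = n ∧ IsPDS k (cycleGraph (m+3)) S}
      = pdNum k (cycleGraph (m+3)) from rfl, h0] at hS
    rw [Set.ncard_eq_zero (Set.toFinite S)] at hS
    subst hS
    rw [powerIter_empty] at hl
    exact Set.empty_ne_univ hl
  omega

end

open SimpleGraph PowerProp in
theorem ppt_cycleGraph (k n : ℕ) (hk : 1 ≤ k) (hn : 3 ≤ n) :
    ppt k (cycleGraph n) = n / 2 := by
  obtain ⟨m, rfl⟩ : ∃ m, n = m + 3 := ⟨n - 3, by omega⟩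
  unfold ppt
  have hT : {t | ∃ S : Set (Fin (m+3)), IsMinPDS k (cycleGraph (m+3)) S ∧
      pptOf k (cycleGraph (m+3)) S = t} = {(m+3)/2} := by
    ext t
    simp only [Set.mem_setOf_eq, Set.mem_singleton_iff]
    constructor
    · rintro ⟨S, ⟨hPDS, hcard⟩, rfl⟩
      rw [pdNum_eq k hk] at hcard
      obtain ⟨a, rfl⟩ := Set.ncard_eq_one.mp hcard
      exact pptOf_singleton k hk a
    · rintro rfl
      exact ⟨{0}, ⟨isPDS_singleton k hk 0, by rw [Set.ncard_singleton, pdNum_eq k hk]⟩,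
        pptOf_singleton k hk 0⟩
  rw [hT, csInf_singleton]
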